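/- Let d > 0 be a real number and let v : ℝ → ℝ be continuously differentiable with v² and (v')² integrable on ℝ and v(ξ) → 0 as ξ → −∞. Then for every x ∈ ℝ: (1/√d)·e^{−x/√d} ∫_{−∞}^x e^{ξ/√d}·( v(ξ)²/d + v'(ξ)²/2 ) dξ ≥ v(x)²/(2d). -/

import Mathlib

open MeasureTheory Set Filter Real

/-- **The convolution estimate `G(w,V) ≥ w²/2` of the blow-up proof** (with `w = v/√d`,
`V = v'`): for `v` continuously differentiable with `v²`, `(v')²` integrable and
`v(ξ) → 0` as `ξ → -∞`,
`(1/√d) e^{-x/√d} ∫_{-∞}^x e^{ξ/√d} (v²/d + v'²/2) dξ ≥ v(x)²/(2d)`. -/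
theorem G_lower_bound (d : ℝ) (hd : 0 < d) (v : ℝ → ℝ) (hv : ContDiff ℝ 1 v)
    (h2 : MeasureTheory.Integrable (fun ξ => (v ξ) ^ 2))
    (h2' : MeasureTheory.Integrable (fun ξ => (deriv v ξ) ^ 2))
    (hlim : Filter.Tendsto v Filter.atBot (nhds 0)) (x : ℝ) :
    (1 / Real.sqrt d) * Real.exp (-x / Real.sqrt d)
      * (∫ ξ in Set.Iio x,
          Real.exp (ξ / Real.sqrt d) * ((v ξ) ^ 2 / d + (deriv v ξ) ^ 2 / 2))
      ≥ (v x) ^ 2 / (2 * d) := by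
  obtain ⟨s, hsdef⟩ : ∃ s, s = Real.sqrt d := ⟨_, rfl⟩
  rw [← hsdef]
  have hs : 0 < s := hsdef ▸ Real.sqrt_pos.mpr hd
  have hs2 : s ^ 2 = d := hsdef ▸ Real.sq_sqrt hd.le
  have hvc : Continuous v := hv.continuous
  have hvc' : Continuous (deriv v) := hv.continuous_deriv le_rfl
  set g : ℝ → ℝ := fun ξ => Real.exp (ξ / s) * ((v ξ) ^ 2 / d + (deriv v ξ) ^ 2 / 2)
    with hgdef
  set F : ℝ → ℝ := fun ξ => Real.exp (ξ / s) * (v ξ) ^ 2 / (2 * d) with hFdef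
  set F' : ℝ → ℝ := fun ξ =>
    Real.exp (ξ / s) * ((v ξ) ^ 2 / (2 * d * s) + v ξ * deriv v ξ / d) with hF'def
  -- derivative of F
  have hderiv : ∀ ξ : ℝ, HasDerivAt F (F' ξ) ξ := by
    intro ξ
    have h1 : HasDerivAt (fun ξ : ℝ => ξ / s) (1 / s) ξ := by
      simpa using (hasDerivAt_id ξ).div_const s
    have hexp : HasDerivAt (fun ξ : ℝ => Real.exp (ξ / s))
        (Real.exp (ξ / s) * (1 / s)) ξ := (Real.hasDerivAt_exp _).comp ξ h1
    have hvd : HasDerivAt v (deriv v ξ) ξ :=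
      (hv.differentiable one_ne_zero ξ).hasDerivAt
    have hv2 : HasDerivAt (fun ξ => (v ξ) ^ 2) (2 * v ξ * deriv v ξ) ξ := by
      simpa [mul_comm, mul_assoc] using (hvd.fun_pow 2)
    have := (hexp.mul hv2).div_const (2 * d)
    refine this.congr_deriv ?_
    rw [hF'def]
    ring
  -- integrability of g on Iic x
  have hcg : Continuous g := by
    apply Continuous.mul
    · exact Real.continuous_exp.comp (continuous_id.div_const s)
    · exact ((hvc.pow 2).div_const d).add ((hvc'.pow 2).div_const 2)
  have hbound : Integrable (fun ξ : ℝ =>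
      Real.exp (x / s) * ((v ξ) ^ 2 / d + (deriv v ξ) ^ 2 / 2)) := by
    exact ((h2.div_const d).add (h2'.div_const 2)).const_mul _
  have hgint : IntegrableOn g (Iic x) := by
    refine Integrable.mono' hbound.integrableOn hcg.aestronglyMeasurable.restrict ?_
    filter_upwards [ae_restrict_mem measurableSet_Iic] with ξ hξ
    have h1 : Real.exp (ξ / s) ≤ Real.exp (x / s) :=
      Real.exp_le_exp.mpr (div_le_div_of_nonneg_right hξ hs.le)
    have h2 : (0:ℝ) ≤ (v ξ) ^ 2 / d + (deriv v ξ) ^ 2 / 2 := by positivity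
    rw [hgdef]
    simp only [Real.norm_eq_abs]
    rw [abs_of_nonneg (by positivity)]
    exact mul_le_mul_of_nonneg_right h1 h2
  -- integrability of F' on Iic x
  have hcF' : Continuous F' := by
    apply Continuous.mul
    · exact Real.continuous_exp.comp (continuous_id.div_const s)
    · exact (((hvc.pow 2).div_const _)).add ((hvc.mul hvc').div_const d)
  have hbound' : Integrable (fun ξ : ℝ =>
      Real.exp (x / s) * ((v ξ) ^ 2 / (2 * d * s) +
        ((v ξ) ^ 2 + (deriv v ξ) ^ 2) / (2 * d))) := by
    exact ((h2.div_const _).add ((h2.add h2').div_const _)).const_mul _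
  have hF'int : IntegrableOn F' (Iic x) := by
    refine Integrable.mono' hbound'.integrableOn hcF'.aestronglyMeasurable.restrict ?_
    filter_upwards [ae_restrict_mem measurableSet_Iic] with ξ hξ
    have h1 : Real.exp (ξ / s) ≤ Real.exp (x / s) :=
      Real.exp_le_exp.mpr (div_le_div_of_nonneg_right hξ hs.le)
    have hexp0 : (0:ℝ) < Real.exp (ξ / s) := Real.exp_pos _
    have h3 : |v ξ * deriv v ξ| ≤ ((v ξ) ^ 2 + (deriv v ξ) ^ 2) / 2 := by
      rw [abs_le]
      constructor <;> nlinarith [sq_nonneg (v ξ + deriv v ξ), sq_nonneg (v ξ - deriv v ξ)]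
    have hBC : |v ξ * deriv v ξ / d| ≤ ((v ξ) ^ 2 + (deriv v ξ) ^ 2) / (2 * d) := by
      rw [abs_div, abs_of_pos hd, ← div_div]
      exact div_le_div_of_nonneg_right h3 hd.le
    have hA : (0:ℝ) ≤ (v ξ) ^ 2 / (2 * d * s) := by positivity
    have habs : |(v ξ) ^ 2 / (2 * d * s) + v ξ * deriv v ξ / d|
        ≤ (v ξ) ^ 2 / (2 * d * s) + ((v ξ) ^ 2 + (deriv v ξ) ^ 2) / (2 * d) := by
      calc |(v ξ) ^ 2 / (2 * d * s) + v ξ * deriv v ξ / d|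
          ≤ |(v ξ) ^ 2 / (2 * d * s)| + |v ξ * deriv v ξ / d| := abs_add_le _ _
        _ ≤ (v ξ) ^ 2 / (2 * d * s) + ((v ξ) ^ 2 + (deriv v ξ) ^ 2) / (2 * d) := by
            rw [abs_of_nonneg hA]; exact add_le_add le_rfl hBC
    rw [hF'def]
    simp only [Real.norm_eq_abs, abs_mul, Real.abs_exp]
    exact mul_le_mul h1 habs (abs_nonneg _) (Real.exp_pos _).le
  -- F tends to 0 at -∞
  have hF0 : Tendsto F atBot (nhds 0) := by
    have hexp : Tendsto (fun ξ : ℝ => Real.exp (ξ / s)) atBot (nhds 0) :=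
      Real.tendsto_exp_atBot.comp (tendsto_id.atBot_div_const hs)
    have hv2 : Tendsto (fun ξ => (v ξ) ^ 2) atBot (nhds 0) := by
      simpa using hlim.pow 2
    have := (hexp.mul hv2).div_const (2 * d)
    simpa [hFdef] using this
  -- FTC
  have hFTC : ∫ ξ in Iic x, F' ξ = F x - 0 :=
    integral_Iic_of_hasDerivAt_of_tendsto' (fun ξ _ => hderiv ξ) hF'int hF0
  rw [sub_zero] at hFTC
  -- pointwise: s * F' ξ ≤ g ξ
  have hmono : ∫ ξ in Iic x, s * F' ξ ≤ ∫ ξ in Iic x, g ξ := by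
    apply setIntegral_mono (hF'int.const_mul s) hgint
    intro ξ
    have hexp0 : (0:ℝ) < Real.exp (ξ / s) := Real.exp_pos _
    simp only [hgdef, hF'def]
    have key : s * ((v ξ) ^ 2 / (2 * d * s) + v ξ * deriv v ξ / d)
        ≤ (v ξ) ^ 2 / d + (deriv v ξ) ^ 2 / 2 := by
      have e1 : s * ((v ξ) ^ 2 / (2 * d * s) + v ξ * deriv v ξ / d)
          = (v ξ) ^ 2 / (2 * d) + s * (v ξ * deriv v ξ) / d := by
        field_simp
      rw [e1, ← sub_nonneg]
      have e2 : (v ξ) ^ 2 / d + (deriv v ξ) ^ 2 / 2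
          - ((v ξ) ^ 2 / (2 * d) + s * (v ξ * deriv v ξ) / d)
          = (v ξ - s * deriv v ξ) ^ 2 / (2 * d) := by
        field_simp
        linear_combination (-(deriv v ξ) ^ 2) * hs2
      rw [e2]; positivity
    calc s * (Real.exp (ξ / s) * ((v ξ) ^ 2 / (2 * d * s) + v ξ * deriv v ξ / d))
        = Real.exp (ξ / s) * (s * ((v ξ) ^ 2 / (2 * d * s) + v ξ * deriv v ξ / d)) := by
          ring
      _ ≤ Real.exp (ξ / s) * ((v ξ) ^ 2 / d + (deriv v ξ) ^ 2 / 2) :=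
          mul_le_mul_of_nonneg_left key hexp0.le
  have hint_eq : ∫ ξ in Iic x, s * F' ξ = s * ∫ ξ in Iic x, F' ξ := by
    rw [integral_const_mul]
  have hge : s * F x ≤ ∫ ξ in Iic x, g ξ := by
    rw [← hFTC, ← hint_eq]; exact hmono
  -- conclude
  have hIio : ∫ ξ in Iio x, g ξ = ∫ ξ in Iic x, g ξ :=
    (integral_Iic_eq_integral_Iio).symm
  have hintg : (v x) ^ 2 / (2 * d) ≤
      (1 / s) * Real.exp (-x / s) * ∫ ξ in Iic x, g ξ := by
    have h1 : (1 / s) * Real.exp (-x / s) * (s * F x) = (v x) ^ 2 / (2 * d) := by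
      rw [hFdef]
      have hexp : Real.exp (-x / s) * Real.exp (x / s) = 1 := by
        rw [← Real.exp_add]; simp [neg_div]
      calc (1 / s) * Real.exp (-x / s) * (s * (Real.exp (x / s) * (v x) ^ 2 / (2 * d)))
          = (s * (1 / s)) * (Real.exp (-x / s) * Real.exp (x / s)) * ((v x) ^ 2 / (2 * d)) := by
            ring
        _ = (v x) ^ 2 / (2 * d) := by rw [mul_one_div_cancel hs.ne', hexp]; ring
    rw [← h1]
    apply mul_le_mul_of_nonneg_left hge (by positivity)
  calc (1 / s) * Real.exp (-x / s) * ∫ ξ in Iio x, g ξ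
      = (1 / s) * Real.exp (-x / s) * ∫ ξ in Iic x, g ξ := by rw [hIio]
    _ ≥ (v x) ^ 2 / (2 * d) := hintg
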